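/- Let v, θ : ℝ → ℝ be twice differentiable, g, b ∈ ℝ, and p, q : ℝ → ℝ satisfy for all x: p(x) + b(2 v v' θ' + v² θ'') + g(v v'' - v² (θ')²) = 0 and q(x) + b(v v'' - v² (θ')²) - g(2 v v' θ' + v² θ'') = 0. Then for all x: d/dx [b·(-v v') - g·(-v² θ')] = q(x) - b·Δ(x), where Δ(x) := (v'(x))² + v(x)² (θ'(x))². -/

import Mathlib

theorem reactive_power_dissipation (v θ p q : ℝ → ℝ) (g b : ℝ)
    (hv : Differentiable ℝ v) (hv' : Differentiable ℝ (deriv v))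
    (hθ : Differentiable ℝ θ) (hθ' : Differentiable ℝ (deriv θ))
    (hA : ∀ x, p x + b * (2 * v x * deriv v x * deriv θ x + (v x) ^ 2 * deriv (deriv θ) x)
          + g * (v x * deriv (deriv v) x - (v x) ^ 2 * (deriv θ x) ^ 2) = 0)
    (hR : ∀ x, q x + b * (v x * deriv (deriv v) x - (v x) ^ 2 * (deriv θ x) ^ 2)
          - g * (2 * v x * deriv v x * deriv θ x + (v x) ^ 2 * deriv (deriv θ) x) = 0) :
    ∀ x, deriv (fun y => b * (-(v y) * deriv v y) - g * (-(v y) ^ 2 * deriv θ y)) x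
      = q x - b * ((deriv v x) ^ 2 + (v x) ^ 2 * (deriv θ x) ^ 2) := by
  intro x
  have hvx := (hv x).hasDerivAt
  have hv'x := (hv' x).hasDerivAt
  have hθx := (hθ x).hasDerivAt
  have hθ'x := (hθ' x).hasDerivAt
  have hd : HasDerivAt (fun y => b * (-(v y) * deriv v y) - g * (-(v y) ^ 2 * deriv θ y))
      (b * (-(deriv v x) * deriv v x + -(v x) * deriv (deriv v) x)
        - g * (-(2 * v x * deriv v x) * deriv θ x + -(v x) ^ 2 * deriv (deriv θ) x)) x := by
    have h1 : HasDerivAt (fun y => -(v y) * deriv v y)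
        (-(deriv v x) * deriv v x + -(v x) * deriv (deriv v) x) x :=
      hvx.neg.mul hv'x
    have h2 : HasDerivAt (fun y => -(v y) ^ 2 * deriv θ y)
        (-(2 * v x * deriv v x) * deriv θ x + -(v x) ^ 2 * deriv (deriv θ) x) x := by
      have : HasDerivAt (fun y => -(v y) ^ 2) (-(2 * v x * deriv v x)) x := by
        have := (hvx.fun_pow 2).fun_neg
        simpa [mul_comm, mul_assoc, mul_left_comm] using this
      exact this.mul hθ'x
    exact (h1.const_mul b).sub (h2.const_mul g)
  rw [hd.deriv]
  have := hR x
  nlinarith [this]
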